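/- arXiv:2110.09343 — 2 statements merged into one kernel-verified Lean document; each statement's English description precedes it below -/
import Mathlib

section
/- For every k, the (k+1)-st iterate of the step function on init_k equals the configuration (Q2, tape_k, k); that is, after moving right past all k ones, the machine M reads the 0 in cell k+1, switches to state Q2, and moves left to cell k, leaving the tape unchanged. -/
/-- Configurations of the 3-state Turing machine: (state, tape, head position). -/
abbrev Config : Type := Fin 3 × (ℕ → Bool) × ℕ

/-- The total step function of the machine M. State 0 = Q1, 1 = Q2, 2 = Q3 (halt). -/
def step (c : Config) : Config :=
  match c with
  | (q, T, p) =>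
    if q = 0 then (if T p then (0, T, p + 1) else (1, T, p - 1))
    else if q = 1 then
      (if T p then (1, Function.update T p false, p - 1) else (2, T, p + 1))
    else (2, T, p)

/-- The input tape 0 1^k 0 0 ⋯ : cell i holds 1 iff 1 ≤ i ≤ k. -/
def tape (k : ℕ) : ℕ → Bool := fun i => decide (1 ≤ i ∧ i ≤ k)

/-- Initial configuration on input 0 1^k: state Q1, scanning cell 1. -/
def init (k : ℕ) : Config := (0, tape k, 1)

lemma sweep (k : ℕ) : ∀ j, j ≤ k → step^[j] (init k) = (0, tape k, j + 1) := by
  intro j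
  induction j with
  | zero => intro _; simp [init]
  | succ n ih =>
    intro h
    rw [Function.iterate_succ_apply', ih (Nat.le_of_succ_le h)]
    simp [step, tape, Nat.succ_le_of_lt, Nat.lt_of_succ_le h]

/-- After k+1 steps, M has read the 0 in cell k+1, switched to state Q2,
and moved left to cell k, leaving the tape unchanged. -/
theorem turn_around (k : ℕ) :
    step^[k + 1] (init k) = (1, tape k, k) := by
  rw [Function.iterate_succ_apply', sweep k k le_rfl]
  simp [step, tape]
end

section
/- For every k, the (2k+2)-nd iterate of the step function on init_k equals the configuration (Q3, fun _ => false, 1); that is, after exactly 2k+2 steps the machine M halts in state Q3 with an all-zero tape, scanning the second tape cell. -/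
lemma tape_update (m : ℕ) :
    Function.update (tape (m + 1)) (m + 1) false = tape m := by
  funext i
  rcases eq_or_ne i (m + 1) with h | h
  · subst h; simp [Function.update, tape]
  · simp only [Function.update, tape]
    rw [dif_neg h]
    simp only [decide_eq_decide]
    omega

lemma tape_zero : tape 0 = fun _ => false := by
  funext i; simp [tape]; omega

lemma phase2 (m : ℕ) : step^[m + 1] (1, tape m, m) = (2, fun _ => false, 1) := by
  induction m with
  | zero =>
    simp [step, tape, tape_zero]
  | succ n ih =>
    have h1 : tape (n + 1) (n + 1) = true := by simp [tape]
    have : step (1, tape (n + 1), n + 1) = (1, tape n, n) := by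
      simp [step, h1, tape_update n]
    rw [Function.iterate_succ_apply, this, ih]

lemma phase1 (k j : ℕ) (hj : j ≤ k) : step^[j] (init k) = (0, tape k, j + 1) := by
  induction j with
  | zero => rfl
  | succ n ih =>
    have hn : n ≤ k := Nat.le_of_succ_le hj
    have ht : tape k (n + 1) = true := by simp [tape]; omega
    rw [Function.iterate_succ_apply', ih hn]
    simp [step, ht]

/-- After exactly 2k+2 steps, M halts in state Q3 with an all-zero tape,
scanning the second tape cell. -/
theorem halts_at (k : ℕ) :
    step^[2 * k + 2] (init k) = (2, fun _ => false, 1) := by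
  have h1 : step^[k + 1] (init k) = (1, tape k, k) := by
    rw [Function.iterate_succ_apply', phase1 k k le_rfl]
    have ht : tape k (k + 1) = false := by simp [tape]
    simp [step, ht]
  have : 2 * k + 2 = (k + 1) + (k + 1) := by omega
  rw [this, Function.iterate_add_apply, h1, phase2]
end
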